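/- Let G and H be topological groups, Γ ≤ G a discrete subgroup, π : G → H a continuous surjective group homomorphism, τ : H → ℤ a group homomorphism, and u ∈ G. Suppose the action of Λ = π(Γ) on H given by λ · h = (π u)^(−τ(λ)) · h · λ is properly discontinuous (for every compact K ⊆ H the set of λ ∈ Λ with (π u)^(−τ λ) · K · λ meeting K is finite). Then the action of Γ on G given by γ · g = u^(−τ(π γ)) · g · γ is properly discontinuous: for every compact K ⊆ G, the set {γ ∈ Γ : u^(−τ(π γ)) · K · γ ∩ K ≠ ∅} is finite. -/

import Mathlib

open Pointwise

/-- A compact set meets a discrete subgroup in a finite set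
(no separation assumptions needed). -/
lemma finite_compact_inter_discrete
    {G : Type*} [Group G] [TopologicalSpace G] [IsTopologicalGroup G]
    (Γ : Subgroup G) [DiscreteTopology Γ]
    {K : Set G} (hK : IsCompact K) : (K ∩ (Γ : Set G)).Finite := by
  -- get an open U ⊆ G with U ∩ Γ = {1}
  have h1 : IsOpen ({(1 : Γ)} : Set Γ) := isOpen_discrete _
  rw [isOpen_induced_iff] at h1
  obtain ⟨U, hUopen, hU⟩ := h1
  have hU1 : (1 : G) ∈ U := by
    have : ((1 : Γ) : G) ∈ U := by
      have : (1 : Γ) ∈ (Subtype.val ⁻¹' U : Set Γ) := by rw [hU]; rfl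
      exact this
    simpa using this
  have hUΓ : ∀ g ∈ U, g ∈ Γ → g = 1 := by
    intro g hg hgΓ
    have : (⟨g, hgΓ⟩ : Γ) ∈ (Subtype.val ⁻¹' U : Set Γ) := hg
    rw [hU] at this
    simpa [Subtype.ext_iff] using this
  -- choose V with v/w ∈ U for v,w ∈ V
  obtain ⟨V, hV, hVU⟩ := exists_nhds_split_inv (hUopen.mem_nhds hU1)
  -- cover K by translates V * x
  obtain ⟨t, -, ht⟩ := hK.elim_nhds_subcover (fun x => (· * x⁻¹) ⁻¹' V)
    (fun x _ => by
      rw [← nhds_translation_mul_inv x]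
      exact Filter.preimage_mem_comap hV)
  have : K ∩ (Γ : Set G) ⊆ ⋃ x ∈ t, ((· * x⁻¹) ⁻¹' V ∩ (Γ : Set G)) := by
    intro g hg
    obtain ⟨hgK, hgΓ⟩ := hg
    obtain ⟨x, hx, hgx⟩ := Set.mem_iUnion₂.1 (ht hgK)
    exact Set.mem_iUnion₂.2 ⟨x, hx, hgx, hgΓ⟩
  refine Set.Finite.subset (Set.Finite.biUnion t.finite_toSet fun x _ => ?_) this
  -- each translate contains at most one element of Γ
  refine Set.Subsingleton.finite fun a ha b hb => ?_
  obtain ⟨haV, haΓ⟩ := ha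
  obtain ⟨hbV, hbΓ⟩ := hb
  have : a * x⁻¹ / (b * x⁻¹) ∈ U := hVU _ haV _ hbV
  have hab : a * b⁻¹ ∈ U := by
    simpa [div_eq_mul_inv, mul_assoc] using this
  have : a * b⁻¹ = 1 := hUΓ _ hab (Γ.mul_mem haΓ (Γ.inv_mem hbΓ))
  exact mul_inv_eq_one.1 this

/-- Proper discontinuity of the twisted Γ-action on G descends from proper
discontinuity of the twisted Λ = π(Γ)-action on H. -/
theorem twisted_action_properly_discontinuous
    {G H : Type*} [Group G] [TopologicalSpace G] [IsTopologicalGroup G]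
    [Group H] [TopologicalSpace H] [IsTopologicalGroup H]
    (Γ : Subgroup G) [DiscreteTopology Γ]
    (π : G →* H) (hπcont : Continuous π) (hπsurj : Function.Surjective π)
    (τ : H →* Multiplicative ℤ) (u : G)
    (hΛ : ∀ K' : Set H, IsCompact K' →
      {lam : H | lam ∈ Γ.map π ∧
        ∃ h ∈ K', (π u) ^ (-(Multiplicative.toAdd (τ lam))) * h * lam ∈ K'}.Finite) :
    ∀ K : Set G, IsCompact K →
      {γ : G | γ ∈ Γ ∧
        ∃ g ∈ K, u ^ (-(Multiplicative.toAdd (τ (π γ)))) * g * γ ∈ K}.Finite := by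
  intro K hK
  have hK' : IsCompact (π '' K) := hK.image hπcont
  have hF := hΛ (π '' K) hK'
  -- every γ in our set satisfies π γ ∈ F and γ ∈ K⁻¹ * u^(τ(π γ)) * K
  set F := {lam : H | lam ∈ Γ.map π ∧
      ∃ h ∈ π '' K, (π u) ^ (-(Multiplicative.toAdd (τ lam))) * h * lam ∈ π '' K}
  -- the compact "trap"
  set T : Set G := ⋃ lam ∈ F, K⁻¹ * ({u ^ (Multiplicative.toAdd (τ lam))} : Set G) * K with hT
  have hTcompact : IsCompact T := hF.isCompact_biUnion fun lam _ =>
    ((hK.inv.mul isCompact_singleton).mul hK)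
  have hsub : {γ : G | γ ∈ Γ ∧
      ∃ g ∈ K, u ^ (-(Multiplicative.toAdd (τ (π γ)))) * g * γ ∈ K} ⊆
      T ∩ (Γ : Set G) := by
    rintro γ ⟨hγΓ, g, hgK, hkK⟩
    refine ⟨?_, hγΓ⟩
    have hπγF : π γ ∈ F := by
      refine ⟨⟨γ, hγΓ, rfl⟩, π g, ⟨g, hgK, rfl⟩, ?_⟩
      refine ⟨u ^ (-(Multiplicative.toAdd (τ (π γ)))) * g * γ, hkK, ?_⟩
      simp [map_mul, map_zpow]
    refine Set.mem_biUnion hπγF ?_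
    -- γ = g⁻¹ * u^(τ(π γ)) * (u^(-τ(π γ)) * g * γ)
    refine ⟨g⁻¹ * u ^ (Multiplicative.toAdd (τ (π γ))),
      ⟨g⁻¹, Set.inv_mem_inv.2 hgK, u ^ (Multiplicative.toAdd (τ (π γ))), rfl, rfl⟩,
      u ^ (-(Multiplicative.toAdd (τ (π γ)))) * g * γ, hkK, ?_⟩
    simp [mul_assoc, zpow_neg, ← mul_assoc]
  exact ((finite_compact_inter_discrete Γ hTcompact).subset hsub)
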